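/- arXiv:2312.02114 — 7 statements merged into one kernel-verified Lean document; each statement's English description precedes it below -/
import Mathlib

section
/- Suppose for every player i: (variation) for all s,t ∈ D, sw(s) ≥ sw(t) implies uᵢ(s) ≥ uᵢ(t)/β; and (lower coordination dependence) min over T(D) of uᵢ ≥ (min over D of uᵢ)/α, with α, β ≥ 1 and all utilities nonnegative. Then PoTA ≥ PoA/(αβ). Dually, if each uᵢ is β-varied and α-upper dependent on coordination (max over T(D) of uᵢ ≤ α·max over D of uᵢ), then PoTS ≤ αβ·PoS. -/
/-- The transition set of a solution set `D`. -/
def transitionSet {ι : Type*} {S : ι → Type*} (D : Set (∀ i, S i)) : Set (∀ i, S i) :=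
  {s | ∀ i, ∃ d ∈ D, s i = d i}

/-- If every player's utility is `β`-varied over `D` and `α`-lower dependent on
coordination, then `PoTA ≥ PoA/(αβ)`; dually, if every player's utility is `β`-varied
and `α`-upper dependent on coordination, then `PoTS ≤ αβ·PoS`. -/
theorem stmt7 {ι : Type*} [Fintype ι] {S : ι → Type*} [∀ i, Fintype (S i)]
    [∀ i, Nonempty (S i)]
    (u : ι → (∀ i, S i) → ℝ) (hnn : ∀ i s, 0 ≤ u i s)
    (D : Set (∀ i, S i)) (hD : D.Nonempty)
    (sw : (∀ i, S i) → ℝ) (hsw : ∀ s, sw s = ∑ i, u i s)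
    (hpos : 0 < sSup (sw '' Set.univ)) (α β : ℝ) (hα : 1 ≤ α) (hβ : 1 ≤ β)
    (hvar : ∀ i, ∀ s ∈ D, ∀ t ∈ D, sw s ≥ sw t → u i s ≥ u i t / β) :
    ((∀ i, sInf (u i '' transitionSet D) ≥ sInf (u i '' D) / α) →
      sInf (sw '' transitionSet D) / sSup (sw '' Set.univ) ≥
        (sInf (sw '' D) / sSup (sw '' Set.univ)) / (α * β)) ∧
    ((∀ i, sSup (u i '' transitionSet D) ≤ α * sSup (u i '' D)) →
      sSup (sw '' transitionSet D) / sSup (sw '' Set.univ) ≤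
        α * β * (sSup (sw '' D) / sSup (sw '' Set.univ))) := by
  have hα0 : (0:ℝ) < α := lt_of_lt_of_le one_pos hα
  have hβ0 : (0:ℝ) < β := lt_of_lt_of_le one_pos hβ
  have hTne : (transitionSet D).Nonempty := by
    obtain ⟨d, hd⟩ := hD
    exact ⟨d, fun i => ⟨d, hd, rfl⟩⟩
  have hfin : ∀ (f : (∀ i, S i) → ℝ) (A : Set (∀ i, S i)), (f '' A).Finite :=
    fun f A => (A.toFinite).image f
  constructor
  · intro hlo
    rw [ge_iff_le, div_right_comm]
    have key : sInf (sw '' D) / (α * β) ≤ sInf (sw '' transitionSet D) := by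
      -- minimizer of sw over D
      obtain ⟨s₀, hs₀D, hs₀⟩ := ((hD.image sw).csInf_mem (hfin sw D))
      apply le_csInf (hTne.image sw)
      rintro x ⟨t, ht, rfl⟩
      have h1 : ∀ i, u i s₀ / (α * β) ≤ u i t := by
        intro i
        have h2 : u i s₀ / β ≤ sInf (u i '' D) := by
          apply le_csInf (hD.image (u i))
          rintro y ⟨s, hs, rfl⟩
          refine hvar i s hs s₀ hs₀D ?_
          rw [hs₀]
          exact csInf_le (hfin sw D).bddBelow ⟨s, hs, rfl⟩
        have h3 : sInf (u i '' transitionSet D) ≤ u i t :=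
          csInf_le (hfin (u i) _).bddBelow ⟨t, ht, rfl⟩
        have h4 := hlo i
        have : u i s₀ / β / α ≤ u i t := by
          calc u i s₀ / β / α ≤ sInf (u i '' D) / α := by gcongr
            _ ≤ sInf (u i '' transitionSet D) := h4
            _ ≤ u i t := h3
        calc u i s₀ / (α * β) = u i s₀ / β / α := by ring
          _ ≤ u i t := this
      calc sInf (sw '' D) / (α * β) = (∑ i, u i s₀) / (α * β) := by rw [← hsw, hs₀]
        _ = ∑ i, u i s₀ / (α * β) := by rw [Finset.sum_div]
        _ ≤ ∑ i, u i t := Finset.sum_le_sum fun i _ => h1 i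
        _ = sw t := (hsw t).symm
    gcongr
  · intro hhi
    have key : sSup (sw '' transitionSet D) ≤ α * β * sSup (sw '' D) := by
      obtain ⟨s₀, hs₀D, hs₀⟩ := ((hD.image sw).csSup_mem (hfin sw D))
      apply csSup_le (hTne.image sw)
      rintro x ⟨t, ht, rfl⟩
      have h1 : ∀ i, u i t ≤ α * β * u i s₀ := by
        intro i
        have h2 : sSup (u i '' D) ≤ β * u i s₀ := by
          apply csSup_le (hD.image (u i))
          rintro y ⟨s, hs, rfl⟩
          have := hvar i s₀ hs₀D s hs (by
            rw [hs₀]; exact le_csSup (hfin sw D).bddAbove ⟨s, hs, rfl⟩)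
          rw [ge_iff_le, div_le_iff₀ hβ0] at this
          linarith [this]
        have h3 : u i t ≤ sSup (u i '' transitionSet D) :=
          le_csSup (hfin (u i) _).bddAbove ⟨t, ht, rfl⟩
        calc u i t ≤ sSup (u i '' transitionSet D) := h3
          _ ≤ α * sSup (u i '' D) := hhi i
          _ ≤ α * (β * u i s₀) := by gcongr
          _ = α * β * u i s₀ := by ring
      calc sw t = ∑ i, u i t := hsw t
        _ ≤ ∑ i, α * β * u i s₀ := Finset.sum_le_sum fun i _ => h1 i
        _ = α * β * ∑ i, u i s₀ := by rw [Finset.mul_sum]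
        _ = α * β * sSup (sw '' D) := by rw [← hsw, hs₀]
    rw [mul_div_assoc']
    gcongr
end

section
/- In the atomic routing game with n players and n parallel identical edges with cost c(x) = x, where each player picks one edge and pays the number of players on her edge: a profile is a Nash equilibrium iff all chosen edges are distinct; every equilibrium has social cost n (so PoA = 1); and merging m equilibria can yield an m-transition of social cost m² + (n − m), so the price of m-transition anarchy is at least (m² + n − m)/n, which equals n when m = n. -/
/-- In the atomic routing game on `n` parallel identical edges, player `i`'s cost in
profile `s` is the number of players sharing her edge. -/
def edgeCost {n : ℕ} (s : Fin n → Fin n) (i : Fin n) : ℕ :=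
  (Finset.univ.filter fun j => s j = s i).card

/-- Social cost: sum of the players' costs. -/
def totalCost {n : ℕ} (s : Fin n → Fin n) : ℕ :=
  ∑ i, edgeCost s i

/-- The `m`-transitions of the Nash-equilibrium set of this game. -/
def mTransNE {n : ℕ} (m : ℕ) : Set (Fin n → Fin n) :=
  {t | ∃ F : Finset (Fin n → Fin n), F.card ≤ m ∧
    (∀ d ∈ F, ∀ i (x : Fin n), edgeCost d i ≤ edgeCost (Function.update d i x) i) ∧
    ∀ i, ∃ d ∈ F, t i = d i}

lemma one_le_edgeCost {n : ℕ} (s : Fin n → Fin n) (i : Fin n) : 1 ≤ edgeCost s i := by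
  have : i ∈ Finset.univ.filter fun j => s j = s i := by simp
  exact Finset.card_pos.mpr ⟨i, this⟩

lemma edgeCost_le {n : ℕ} (s : Fin n → Fin n) (i : Fin n) : edgeCost s i ≤ n := by
  simpa [edgeCost] using (Finset.card_filter_le Finset.univ fun j => s j = s i)

lemma edgeCost_of_inj {n : ℕ} {s : Fin n → Fin n} (hs : Function.Injective s) (i : Fin n) :
    edgeCost s i = 1 := by
  unfold edgeCost
  have : (Finset.univ.filter fun j => s j = s i) = {i} := by
    ext j; simp only [Finset.mem_filter, Finset.mem_univ, true_and, Finset.mem_singleton]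
    exact ⟨fun h => hs h, fun h => by rw [h]⟩
  rw [this, Finset.card_singleton]

lemma ne_iff_inj {n : ℕ} (s : Fin n → Fin n) :
    (∀ i (x : Fin n), edgeCost s i ≤ edgeCost (Function.update s i x) i) ↔
      Function.Injective s := by
  constructor
  · intro h
    by_contra hinj
    have hsurj : ¬ Function.Surjective s := fun hs =>
      hinj (Finite.injective_iff_surjective.mpr hs)
    rw [Function.Surjective] at hsurj
    push_neg at hsurj
    obtain ⟨e, he⟩ := hsurj
    obtain ⟨a, b, hab, hne⟩ : ∃ a b, s a = s b ∧ a ≠ b := by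
      simp only [Function.Injective, not_forall] at hinj
      obtain ⟨a, b, h1, h2⟩ := hinj
      exact ⟨a, b, h1, h2⟩
    have h2 : 2 ≤ edgeCost s a := by
      have hsub : ({a, b} : Finset (Fin n)) ⊆ Finset.univ.filter fun j => s j = s a := by
        intro j hj
        simp only [Finset.mem_insert, Finset.mem_singleton] at hj
        rcases hj with rfl | rfl <;> simp [hab.symm]
      calc 2 = ({a, b} : Finset (Fin n)).card := by rw [Finset.card_pair hne]
        _ ≤ _ := Finset.card_le_card hsub
    have h1 : edgeCost (Function.update s a e) a = 1 := by
      unfold edgeCost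
      have : (Finset.univ.filter fun j => Function.update s a e j = Function.update s a e a)
          = {a} := by
        ext j
        simp only [Finset.mem_filter, Finset.mem_univ, true_and, Finset.mem_singleton,
          Function.update_self]
        constructor
        · intro hj
          by_contra hne'
          rw [Function.update_of_ne hne'] at hj
          exact (he j hj).elim
        · intro h; rw [h, Function.update_self]
      rw [this, Finset.card_singleton]
    have := h a e
    omega
  · intro hs i x
    rw [edgeCost_of_inj hs i]
    exact one_le_edgeCost _ _

lemma totalCost_of_inj {n : ℕ} (s : Fin n → Fin n) (hs : Function.Injective s) :
    totalCost s = n := by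
  unfold totalCost
  simp [edgeCost_of_inj hs]

lemma n_le_totalCost {n : ℕ} (s : Fin n → Fin n) : n ≤ totalCost s := by
  calc n = ∑ _i : Fin n, 1 := by simp
    _ ≤ totalCost s := Finset.sum_le_sum fun i _ => one_le_edgeCost s i

lemma totalCost_le_sq {n : ℕ} (s : Fin n → Fin n) : totalCost s ≤ n ^ 2 := by
  calc totalCost s ≤ ∑ _i : Fin n, n := Finset.sum_le_sum fun i _ => edgeCost_le s i
    _ = n ^ 2 := by simp [sq]

section Construction
variable {n : ℕ} (hn : 0 < n) (m : ℕ)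

/-- the merged profile -/
def tProf : Fin n → Fin n := fun i => if (i : ℕ) < m then ⟨0, hn⟩ else i

lemma card_filter_lt (hmn : m ≤ n) :
    (Finset.univ.filter fun k : Fin n => (k : ℕ) < m).card = m := by
  rw [← Finset.card_range m]
  apply Finset.card_bij (fun (k : Fin n) _ => (k : ℕ))
  · intro k hk
    simp only [Finset.mem_filter] at hk
    simpa using hk.2
  · intro a _ b _ hab
    exact Fin.val_injective hab
  · intro x hx
    rw [Finset.mem_range] at hx
    exact ⟨⟨x, lt_of_lt_of_le hx hmn⟩, by simp [hx], rfl⟩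

lemma tProf_mem (hm1 : 1 ≤ m) (hmn : m ≤ n) : tProf hn m ∈ mTransNE (n := n) m := by
  classical
  refine ⟨(Finset.univ.filter fun k : Fin n => (k : ℕ) < m).image
      (fun k => ⇑(Equiv.swap ⟨0, hn⟩ k)), ?_, ?_, ?_⟩
  · exact le_trans Finset.card_image_le (le_of_eq (card_filter_lt m hmn))
  · intro d hd
    simp only [Finset.mem_image, Finset.mem_filter] at hd
    obtain ⟨k, _, rfl⟩ := hd
    exact (ne_iff_inj _).mpr (Equiv.injective _)
  · intro i
    by_cases hi : (i : ℕ) < m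
    · refine ⟨⇑(Equiv.swap ⟨0, hn⟩ i), ?_, ?_⟩
      · simp only [Finset.mem_image, Finset.mem_filter]
        exact ⟨i, by simp [hi], rfl⟩
      · simp [tProf, hi, Equiv.swap_apply_right]
    · refine ⟨⇑(Equiv.swap ⟨0, hn⟩ ⟨0, hn⟩), ?_, ?_⟩
      · simp only [Finset.mem_image, Finset.mem_filter]
        refine ⟨⟨0, hn⟩, ?_, rfl⟩
        simp only [Finset.mem_univ, true_and]
        exact hm1
      · simp [tProf, hi, Equiv.swap_self]

lemma tProf_eq_zero_iff (hm1 : 1 ≤ m) (j : Fin n) :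
    tProf hn m j = ⟨0, hn⟩ ↔ (j : ℕ) < m := by
  unfold tProf
  by_cases hj : (j : ℕ) < m
  · simp [hj]
  · simp only [hj, if_false, iff_false]
    intro h
    apply hj
    have : (j : ℕ) = 0 := congrArg Fin.val h
    omega

lemma tProf_totalCost (hm1 : 1 ≤ m) (hmn : m ≤ n) :
    totalCost (tProf hn m) = m ^ 2 + (n - m) := by
  classical
  set P := fun k : Fin n => (k : ℕ) < m with hP
  have hcard : (Finset.univ.filter P).card = m := card_filter_lt m hmn
  have hcard' : (Finset.univ.filter fun k => ¬ P k).card = n - m := by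
    have := Finset.card_filter_add_card_filter_not (s := (Finset.univ : Finset (Fin n)))
      (p := P)
    rw [hcard] at this
    simp only [Finset.card_univ, Fintype.card_fin] at this
    omega
  have hlow : ∀ i : Fin n, P i → edgeCost (tProf hn m) i = m := by
    intro i hi
    unfold edgeCost
    have hti : tProf hn m i = ⟨0, hn⟩ := (tProf_eq_zero_iff hn m hm1 i).mpr hi
    rw [hti]
    have : (Finset.univ.filter fun j => tProf hn m j = ⟨0, hn⟩) = Finset.univ.filter P := by
      ext j
      simp only [Finset.mem_filter, Finset.mem_univ, true_and]
      exact tProf_eq_zero_iff hn m hm1 j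
    rw [this, hcard]
  have hhigh : ∀ i : Fin n, ¬ P i → edgeCost (tProf hn m) i = 1 := by
    intro i hi
    unfold edgeCost
    have hti : tProf hn m i = i := if_neg hi
    rw [hti]
    have : (Finset.univ.filter fun j => tProf hn m j = i) = {i} := by
      ext j
      simp only [Finset.mem_filter, Finset.mem_univ, true_and, Finset.mem_singleton]
      constructor
      · intro hj
        by_cases hjm : (j : ℕ) < m
        · exfalso
          have : tProf hn m j = ⟨0, hn⟩ := (tProf_eq_zero_iff hn m hm1 j).mpr hjm
          rw [this] at hj
          have : (i : ℕ) = 0 := (congrArg Fin.val hj).symm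
          simp only [hP] at hi
          omega
        · rwa [show tProf hn m j = j from if_neg hjm] at hj
      · intro h; rw [h, hti]
    rw [this, Finset.card_singleton]
  unfold totalCost
  rw [← Finset.sum_filter_add_sum_filter_not Finset.univ P]
  rw [Finset.sum_congr rfl (fun i hi => hlow i (Finset.mem_filter.mp hi).2),
    Finset.sum_congr rfl (fun i hi => hhigh i (Finset.mem_filter.mp hi).2)]
  rw [Finset.sum_const, Finset.sum_const, hcard, hcard', smul_eq_mul, smul_eq_mul, sq]
  omega

end Construction

/-- In the atomic routing game with `n` players on `n` parallel edges with cost `c(x)=x`: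
a profile is a Nash equilibrium iff it is injective; every equilibrium has social cost
`n` (so `PoA = 1`); some `m`-transition has social cost `m² + (n − m)`; hence the price
of `m`-transition anarchy is at least `(m² + n − m)/n`, which equals `n` when `m = n`. -/
theorem stmt12 {n : ℕ} (hn : 0 < n) (m : ℕ) (hm1 : 1 ≤ m) (hmn : m ≤ n) :
    (∀ s : Fin n → Fin n,
      ((∀ i (x : Fin n), edgeCost s i ≤ edgeCost (Function.update s i x) i) ↔
        Function.Injective s)) ∧
    (∀ s : Fin n → Fin n, Function.Injective s → totalCost s = n) ∧
    (∃ t ∈ mTransNE (n := n) m, totalCost t = m ^ 2 + (n - m)) ∧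
    ((m ^ 2 + (n - m) : ℝ) / n ≤
      sSup ((fun t : Fin n → Fin n => (totalCost t : ℝ)) '' mTransNE (n := n) m) /
        sInf ((fun s : Fin n → Fin n => (totalCost s : ℝ)) '' Set.univ)) ∧
    (m = n → (m ^ 2 + (n - m) : ℝ) / n = n) := by
  refine ⟨ne_iff_inj, totalCost_of_inj, ⟨tProf hn m, tProf_mem hn m hm1 hmn,
    tProf_totalCost hn m hm1 hmn⟩, ?_, ?_⟩
  · set S := (fun t : Fin n → Fin n => (totalCost t : ℝ)) '' mTransNE (n := n) m with hSdef
    set I := (fun s : Fin n → Fin n => (totalCost s : ℝ)) '' Set.univ with hIdef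
    have hid : Function.Injective (id : Fin n → Fin n) := fun a b h => h
    have hIinf : sInf I = n := by
      apply le_antisymm
      · apply csInf_le
        · exact ⟨0, fun x hx => by obtain ⟨s, _, rfl⟩ := hx; positivity⟩
        · exact ⟨id, Set.mem_univ _, by simp [totalCost_of_inj id hid]⟩
      · apply le_csInf (Set.Nonempty.image _ ⟨id, Set.mem_univ _⟩)
        rintro x ⟨s, -, rfl⟩
        show (n : ℝ) ≤ (totalCost s : ℝ)
        exact_mod_cast n_le_totalCost s
    have hS : ((m ^ 2 + (n - m) : ℕ) : ℝ) ≤ sSup S := by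
      apply le_csSup
      · refine ⟨(n ^ 2 : ℝ), fun x hx => ?_⟩
        obtain ⟨t, _, rfl⟩ := hx
        show (totalCost t : ℝ) ≤ (n : ℝ) ^ 2
        exact_mod_cast totalCost_le_sq t
      · refine ⟨tProf hn m, tProf_mem hn m hm1 hmn, ?_⟩
        show (totalCost (tProf hn m) : ℝ) = _
        rw [tProf_totalCost hn m hm1 hmn]
    rw [hIinf]
    have hcast : ((m ^ 2 + (n - m) : ℕ) : ℝ) = (m ^ 2 + (n - m) : ℝ) := by
      push_cast [hmn]; ring
    rw [hcast] at hS
    have hn' : (0 : ℝ) < n := by exact_mod_cast hn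
    gcongr
  · rintro rfl
    have hn' : ((m : ℝ)) ≠ 0 := by
      have : (0:ℝ) < m := by exact_mod_cast hn
      exact this.ne'
    field_simp
    ring
end

section
/- In a two-player game, if for all x, x' ∈ S₁ and y, y' ∈ S₂: (u₁(x,y) ≤ u₁(x',y) and u₂(x,y) ≤ u₂(x,y')) implies (sw(x,y) ≤ sw(x',y) or sw(x,y) ≤ sw(x,y')), then the maximum social welfare over transitions of Nash equilibria equals the maximum over Nash equilibria (PoTS = PoS). -/
/-- Nash equilibria of a two-player game. -/
def nashSet2 {S₁ S₂ : Type*} (u₁ u₂ : S₁ → S₂ → ℝ) : Set (S₁ × S₂) :=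
  {p | (∀ x' : S₁, u₁ x' p.2 ≤ u₁ p.1 p.2) ∧ (∀ y' : S₂, u₂ p.1 y' ≤ u₂ p.1 p.2)}

/-- Transitions of the Nash equilibria of a two-player game. -/
def transNE2 {S₁ S₂ : Type*} (u₁ u₂ : S₁ → S₂ → ℝ) : Set (S₁ × S₂) :=
  {p | (∃ y' : S₂, (p.1, y') ∈ nashSet2 u₁ u₂) ∧ (∃ x' : S₁, (x', p.2) ∈ nashSet2 u₁ u₂)}

/-- In a two-player game, if whenever `u₁(x,y) ≤ u₁(x',y)` and `u₂(x,y) ≤ u₂(x,y')`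
one of `sw(x,y) ≤ sw(x',y)` or `sw(x,y) ≤ sw(x,y')` holds, then the best social
welfare over transitions of Nash equilibria equals the best over Nash equilibria
(`PoTS = PoS`). -/
theorem stmt14 {S₁ S₂ : Type*} [Fintype S₁] [Fintype S₂]
    (u₁ u₂ : S₁ → S₂ → ℝ) (sw : S₁ × S₂ → ℝ) (hsw : ∀ p, sw p = u₁ p.1 p.2 + u₂ p.1 p.2)
    (hNE : (nashSet2 u₁ u₂).Nonempty)
    (h : ∀ (x x' : S₁) (y y' : S₂),
      u₁ x y ≤ u₁ x' y → u₂ x y ≤ u₂ x y' →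
        (sw (x, y) ≤ sw (x', y) ∨ sw (x, y) ≤ sw (x, y'))) :
    sSup (sw '' transNE2 u₁ u₂) = sSup (sw '' nashSet2 u₁ u₂) := by
  have hsub : nashSet2 u₁ u₂ ⊆ transNE2 u₁ u₂ := by
    intro p hp
    exact ⟨⟨p.2, hp⟩, ⟨p.1, hp⟩⟩
  have hfinT : (sw '' transNE2 u₁ u₂).Finite := (Set.toFinite _).image _
  have hfinN : (sw '' nashSet2 u₁ u₂).Finite := (Set.toFinite _).image _
  have hbddN : BddAbove (sw '' nashSet2 u₁ u₂) := hfinN.bddAbove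
  apply le_antisymm
  · apply csSup_le ((hNE.mono hsub).image sw)
    rintro _ ⟨⟨x, y⟩, ⟨⟨y', hy'⟩, ⟨x', hx'⟩⟩, rfl⟩
    have h1 : u₁ x y ≤ u₁ x' y := hx'.1 x
    have h2 : u₂ x y ≤ u₂ x y' := hy'.2 y
    rcases h x x' y y' h1 h2 with hle | hle
    · exact hle.trans (le_csSup hbddN ⟨(x', y), hx', rfl⟩)
    · exact hle.trans (le_csSup hbddN ⟨(x, y'), hy', rfl⟩)
  · exact csSup_le_csSup hfinT.bddAbove (hNE.image sw) (Set.image_mono hsub)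
end

section
/- In any α,β,λ,μ-extensively smooth game with nonnegative utilities, every transition s of the Nash equilibria satisfies sw(s) ≥ (αβλ)/(1 + αβμ) · sw(s*), where s* is a socially optimal profile; hence PoTA ≥ αβλ/(1 + αβμ). -/
/-- The set of (pure) Nash equilibria of the game with utilities `u`. -/
def nashSet {ι : Type*} [DecidableEq ι] {S : ι → Type*}
    (u : ι → (∀ i, S i) → ℝ) : Set (∀ i, S i) :=
  {s | ∀ i, ∀ y : S i, u i (Function.update s i y) ≤ u i s}

/-- In an `α,β,λ,μ`-extensively smooth game with nonnegative utilities, every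
transition `s` of the Nash equilibria satisfies
`sw(s) ≥ (αβλ)/(1 + αβμ)·sw(s*)` for any socially optimal `s*`;
hence `PoTA ≥ αβλ/(1 + αβμ)`. -/
theorem stmt15 {ι : Type*} [Fintype ι] [DecidableEq ι] {S : ι → Type*}
    (u : ι → (∀ i, S i) → ℝ) (hnn : ∀ i s, 0 ≤ u i s)
    (sw : (∀ i, S i) → ℝ) (hsw : ∀ s, sw s = ∑ i, u i s)
    (α β lam μ : ℝ) (hα : 0 < α) (hβ : 0 < β) (hlam : 0 < lam) (hμ : 0 ≤ μ)
    (hden : 0 < 1 + α * β * μ)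
    (hNE : (nashSet u).Nonempty)
    (h1 : ∀ i, ∀ s ∈ transitionSet (nashSet u), ∀ d ∈ nashSet u,
      s i = d i → u i s ≥ α * u i d)
    (h2 : ∀ sstar : ∀ i, S i, (∀ w, sw w ≤ sw sstar) →
      ∀ i, ∀ t ∈ transitionSet (nashSet u), ∀ v ∈ transitionSet (nashSet u),
        u i (Function.update t i (sstar i)) ≥ β * u i (Function.update v i (sstar i)))
    (h3 : ∀ sstar : ∀ i, S i, (∀ w, sw w ≤ sw sstar) →
      ∀ t ∈ transitionSet (nashSet u),
        ∑ i, u i (Function.update t i (sstar i)) ≥ lam * sw sstar - μ * sw t) :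
    ∀ s ∈ transitionSet (nashSet u), ∀ sstar : ∀ i, S i, (∀ w, sw w ≤ sw sstar) →
      sw s ≥ (α * β * lam) / (1 + α * β * μ) * sw sstar := by
  intro s hs sstar hopt
  have hNEsub : nashSet u ⊆ transitionSet (nashSet u) := by
    intro d hd i; exact ⟨d, hd, rfl⟩
  -- key pointwise bound: u i s ≥ α*β * u i (update s i (sstar i))
  have key : ∀ i, u i s ≥ α * β * u i (Function.update s i (sstar i)) := by
    intro i
    obtain ⟨d, hd, hdi⟩ := hs i
    have hA : u i s ≥ α * u i d := h1 i s hs d hd hdi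
    have hB : u i (Function.update d i (sstar i)) ≤ u i d := hd i (sstar i)
    have hC : u i (Function.update d i (sstar i)) ≥
        β * u i (Function.update s i (sstar i)) :=
      h2 sstar hopt i d (hNEsub hd) s hs
    nlinarith [hnn i (Function.update s i (sstar i))]
  have hsum : sw s ≥ α * β * (∑ i, u i (Function.update s i (sstar i))) := by
    rw [hsw, Finset.mul_sum]
    exact Finset.sum_le_sum fun i _ => key i
  have h3' := h3 sstar hopt s hs
  have hmul := mul_le_mul_of_nonneg_left h3' (by positivity : (0:ℝ) ≤ α * β)
  have hmain : (1 + α * β * μ) * sw s ≥ α * β * lam * sw sstar := by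
    nlinarith
  rw [ge_iff_le, div_mul_eq_mul_div, div_le_iff₀ hden]
  linarith
end

section
/- In a graph coordination game with colour set {1,2}, in any stable transition every player i has at least ⌊(deg(i) − 1)/2⌋ neighbours of her own colour, and in any Nash equilibrium every player i has at least ⌈deg(i)/2⌉ neighbours of her own colour. -/
/-- Utility of node `i` in the coordination game on graph `G` with colouring `s`:
the number of neighbours of `i` sharing `i`'s colour. -/
noncomputable def coordUtil {V : Type*} (G : SimpleGraph V) (s : V → Fin 2) (i : V) : ℕ :=
  {j | G.Adj i j ∧ s j = s i}.ncard

/-- `i`'s current colour is a best response in colouring `s`. -/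
def isBR {V : Type*} [DecidableEq V] (G : SimpleGraph V) (s : V → Fin 2) (i : V) : Prop :=
  ∀ x : Fin 2, coordUtil G (Function.update s i x) i ≤ coordUtil G s i

/-- `s` is a (pure) Nash equilibrium of the coordination game on `G`. -/
def isNashEq {V : Type*} [DecidableEq V] (G : SimpleGraph V) (s : V → Fin 2) : Prop :=
  ∀ i, isBR G s i

/-- `s` is a stable transition: every non-best-responding player `i` has another
non-best-responding player `j` one of whose best responses renders `i`'s current
colour a best response. (Since monochromatic colourings are equilibria, every
colouring is a transition of the Nash equilibria.) -/
def isStableTransition {V : Type*} [DecidableEq V] (G : SimpleGraph V)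
    (s : V → Fin 2) : Prop :=
  ∀ i, ¬ isBR G s i → ∃ j, j ≠ i ∧ ¬ isBR G s j ∧
    ∃ x : Fin 2,
      (∀ y : Fin 2,
        coordUtil G (Function.update s j y) j ≤ coordUtil G (Function.update s j x) j) ∧
      isBR G (Function.update s j x) i

section Aux
variable {V : Type*} [DecidableEq V] (G : SimpleGraph V) (s : V → Fin 2)

lemma fin2_eq_or (a b : Fin 2) : a = b ∨ a = 1 - b := by revert a b; decide

lemma fin2_ne {a b : Fin 2} (h : a ≠ b) : a = 1 - b := by revert h; revert a b; decide

lemma fin2_self_ne (c : Fin 2) : c ≠ 1 - c := by revert c; decide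

lemma fin2_sub_sub (c : Fin 2) : 1 - (1 - c) = c := by revert c; decide

lemma util_update_eq (i : V) (x : Fin 2) :
    coordUtil G (Function.update s i x) i = {j | G.Adj i j ∧ s j = x}.ncard := by
  unfold coordUtil
  congr 1
  ext j
  by_cases hj : j = i
  · subst hj; simp [G.irrefl]
  · simp [Function.update_apply, hj]

lemma isBR_iff (i : V) : isBR G s i ↔
    {j | G.Adj i j ∧ s j = 1 - s i}.ncard ≤ {j | G.Adj i j ∧ s j = s i}.ncard := by
  constructor
  · intro h
    have := h (1 - s i)
    rwa [util_update_eq] at this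
  · intro h x
    rw [util_update_eq]
    rcases fin2_eq_or x (s i) with hx | hx <;> subst hx
    · exact le_refl _
    · exact h

variable [Fintype V]

lemma part_card (i : V) (c : Fin 2) :
    {j | G.Adj i j ∧ s j = c}.ncard + {j | G.Adj i j ∧ s j = 1 - c}.ncard
      = {j | G.Adj i j}.ncard := by
  rw [← Set.ncard_union_eq ?_ (Set.toFinite _) (Set.toFinite _)]
  · congr 1
    ext k
    simp only [Set.mem_union, Set.mem_setOf_eq]
    constructor
    · rintro (⟨h, _⟩ | ⟨h, _⟩) <;> exact h
    · intro h
      rcases fin2_eq_or (s k) c with hc | hc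
      · exact Or.inl ⟨h, hc⟩
      · exact Or.inr ⟨h, hc⟩
  · rw [Set.disjoint_left]
    rintro k ⟨_, h1⟩ ⟨_, h2⟩
    rw [h1] at h2
    exact fin2_self_ne c h2

lemma upd_set_new {i j : V} (hadj : G.Adj i j) {x : Fin 2} (hx : s j ≠ x) :
    {k | G.Adj i k ∧ Function.update s j x k = x} = insert j {k | G.Adj i k ∧ s k = x} := by
  ext k
  by_cases hk : k = j
  · subst hk; simp [hadj]
  · simp [Function.update_apply, hk]

lemma upd_set_old {i j : V} {x : Fin 2} (hx : s j ≠ x) :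
    {k | G.Adj i k ∧ Function.update s j x k = s j}
      = {k | G.Adj i k ∧ s k = s j} \ {j} := by
  ext k
  by_cases hk : k = j
  · subst hk; simp [Ne.symm hx]
  · simp [Function.update_apply, hk]

lemma upd_set_nonadj {i j : V} (hadj : ¬ G.Adj i j) (x c : Fin 2) :
    {k | G.Adj i k ∧ Function.update s j x k = c} = {k | G.Adj i k ∧ s k = c} := by
  ext k
  by_cases hk : k = j
  · subst hk; simp [hadj]
  · simp [Function.update_apply, hk]

end Aux

/-- In a two-colour graph coordination game, in a stable transition every player has
at least `⌊(deg(i) − 1)/2⌋` same-coloured neighbours, and in a Nash equilibrium every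
player has at least `⌈deg(i)/2⌉` same-coloured neighbours. -/
theorem stmt16 {V : Type*} [Fintype V] [DecidableEq V] (G : SimpleGraph V)
    (s : V → Fin 2) :
    (isStableTransition G s →
      ∀ i, ({j | G.Adj i j}.ncard - 1) / 2 ≤ coordUtil G s i) ∧
    (isNashEq G s →
      ∀ i, ({j | G.Adj i j}.ncard + 1) / 2 ≤ coordUtil G s i) := by
  have key : ∀ i, isBR G s i →
      ({j | G.Adj i j}.ncard + 1) / 2 ≤ coordUtil G s i := by
    intro i h
    have h1 := (isBR_iff G s i).1 h
    have h2 := part_card G s i (s i)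
    unfold coordUtil
    omega
  constructor
  · intro hst i
    by_cases hBR : isBR G s i
    · have := key i hBR; omega
    · obtain ⟨j, hji, hjBR, x, hmax, hBRi⟩ := hst i hBR
      have hx : s j ≠ x := by
        intro h
        apply hjBR
        intro y
        have := hmax y
        rwa [← h, Function.update_eq_self] at this
      rw [isBR_iff] at hBR
      push_neg at hBR
      have hti : Function.update s j x i = s i := Function.update_of_ne (Ne.symm hji) _ _
      have hBRi' := (isBR_iff G _ i).1 hBRi
      rw [hti] at hBRi'
      have hpart := part_card G s i (s i)
      unfold coordUtil
      by_cases hadj : G.Adj i j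
      · have hxv : x = 1 - s j := fin2_ne (Ne.symm hx)
        rcases fin2_eq_or (s j) (s i) with hsj | hsj
        · -- j had i's colour and switches away: contradiction with best response of i
          have hxv' : x = 1 - s i := by rw [hxv, hsj]
          have e1 : {k | G.Adj i k ∧ Function.update s j x k = s i}
              = {k | G.Adj i k ∧ s k = s i} \ {j} := by
            rw [← hsj]; exact upd_set_old G s hx
          have e2 : {k | G.Adj i k ∧ Function.update s j x k = 1 - s i}
              = insert j {k | G.Adj i k ∧ s k = 1 - s i} := by
            rw [← hxv']; exact upd_set_new G s hadj hx
          rw [e1, e2] at hBRi'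
          have hj1 : j ∈ {k | G.Adj i k ∧ s k = s i} := ⟨hadj, hsj⟩
          have hj2 : j ∉ {k | G.Adj i k ∧ s k = 1 - s i} := by
            rintro ⟨-, h⟩
            rw [hsj] at h
            exact fin2_self_ne (s i) h
          rw [Set.ncard_diff_singleton_of_mem hj1,
            Set.ncard_insert_of_notMem hj2 (Set.toFinite _)] at hBRi'
          have hpos : 0 < {k | G.Adj i k ∧ s k = s i}.ncard :=
            (Set.ncard_pos (Set.toFinite _)).2 ⟨j, hj1⟩
          omega
        · -- j had the other colour and switches to i's colour
          have hxv' : x = s i := by rw [hxv, hsj, fin2_sub_sub]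
          have e1 : {k | G.Adj i k ∧ Function.update s j x k = s i}
              = insert j {k | G.Adj i k ∧ s k = s i} := by
            rw [← hxv']; exact upd_set_new G s hadj hx
          have e2 : {k | G.Adj i k ∧ Function.update s j x k = 1 - s i}
              = {k | G.Adj i k ∧ s k = 1 - s i} \ {j} := by
            rw [← hsj]; exact upd_set_old G s hx
          rw [e1, e2] at hBRi'
          have hj1 : j ∉ {k | G.Adj i k ∧ s k = s i} := by
            rintro ⟨-, h⟩
            rw [hsj] at h
            exact fin2_self_ne (s i) h.symm
          have hj2 : j ∈ {k | G.Adj i k ∧ s k = 1 - s i} := ⟨hadj, hsj⟩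
          rw [Set.ncard_insert_of_notMem hj1 (Set.toFinite _),
            Set.ncard_diff_singleton_of_mem hj2] at hBRi'
          have hpos : 0 < {k | G.Adj i k ∧ s k = 1 - s i}.ncard :=
            (Set.ncard_pos (Set.toFinite _)).2 ⟨j, hj2⟩
          omega
      · rw [upd_set_nonadj G s hadj, upd_set_nonadj G s hadj] at hBRi'
        omega
  · intro hne i
    exact key i (hne i)
end

section
/- In a graph coordination game with two colours, the social welfare of any stable transition is at least |E| − |N|, and the social welfare of any Nash equilibrium is at least |E|; since the maximum social welfare is 2|E|, the price of stable transition anarchy is at least 1/2 − |N|/(2|E|) and the price of anarchy is at least 1/2. -/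
lemma coordUtil_update {V : Type*} [DecidableEq V] (G : SimpleGraph V) (s : V → Fin 2)
    (i : V) (x : Fin 2) :
    coordUtil G (Function.update s i x) i = {j | G.Adj i j ∧ s j = x}.ncard := by
  unfold coordUtil
  congr 1
  ext j
  simp only [Set.mem_setOf_eq, Function.update_self]
  constructor
  · rintro ⟨h, hj⟩
    exact ⟨h, by rwa [Function.update_of_ne (G.ne_of_adj h).symm] at hj⟩
  · rintro ⟨h, hj⟩
    exact ⟨h, by rwa [Function.update_of_ne (G.ne_of_adj h).symm]⟩

lemma nash_pointwise {V : Type*} [DecidableEq V] (G : SimpleGraph V) (s : V → Fin 2)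
    {i : V} (h : isBR G s i) (y : Fin 2) :
    {j | G.Adj i j ∧ s j = y}.ncard ≤ {j | G.Adj i j ∧ s j = s i}.ncard := by
  have := h y
  rwa [coordUtil_update] at this

lemma stable_pointwise {V : Type*} [Fintype V] [DecidableEq V] (G : SimpleGraph V)
    (s : V → Fin 2) (h : isStableTransition G s) (i : V) (y : Fin 2) :
    {j | G.Adj i j ∧ s j = y}.ncard ≤ {j | G.Adj i j ∧ s j = s i}.ncard + 2 := by
  by_cases hBR : isBR G s i
  · exact le_trans (nash_pointwise G s hBR y) (Nat.le_add_right _ _)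
  · obtain ⟨j, hji, -, x, -, hBRi⟩ := h i hBR
    set s' : V → Fin 2 := Function.update s j x with hs'
    have hsi : s' i = s i := Function.update_of_ne hji.symm _ _
    have key : {k | G.Adj i k ∧ s' k = y}.ncard ≤ {k | G.Adj i k ∧ s' k = s i}.ncard := by
      have := hBRi y
      rw [coordUtil_update] at this
      unfold coordUtil at this
      rwa [hsi] at this
    have h1 : {k | G.Adj i k ∧ s k = y} ⊆ {k | G.Adj i k ∧ s' k = y} ∪ {j} := by
      rintro k ⟨ha, hc⟩
      by_cases hk : k = j
      · exact Or.inr hk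
      · exact Or.inl ⟨ha, by rwa [hs', Function.update_of_ne hk]⟩
    have h2 : {k | G.Adj i k ∧ s' k = s i} ⊆ {k | G.Adj i k ∧ s k = s i} ∪ {j} := by
      rintro k ⟨ha, hc⟩
      by_cases hk : k = j
      · exact Or.inr hk
      · exact Or.inl ⟨ha, by rwa [hs', Function.update_of_ne hk] at hc⟩
    have c1 : {k | G.Adj i k ∧ s k = y}.ncard ≤ {k | G.Adj i k ∧ s' k = y}.ncard + 1 := by
      calc {k | G.Adj i k ∧ s k = y}.ncard
          ≤ ({k | G.Adj i k ∧ s' k = y} ∪ {j}).ncard :=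
            Set.ncard_le_ncard h1 (Set.toFinite _)
        _ ≤ {k | G.Adj i k ∧ s' k = y}.ncard + ({j} : Set V).ncard := Set.ncard_union_le _ _
        _ = {k | G.Adj i k ∧ s' k = y}.ncard + 1 := by rw [Set.ncard_singleton]
    have c2 : {k | G.Adj i k ∧ s' k = s i}.ncard ≤ {k | G.Adj i k ∧ s k = s i}.ncard + 1 := by
      calc {k | G.Adj i k ∧ s' k = s i}.ncard
          ≤ ({k | G.Adj i k ∧ s k = s i} ∪ {j}).ncard :=
            Set.ncard_le_ncard h2 (Set.toFinite _)
        _ ≤ {k | G.Adj i k ∧ s k = s i}.ncard + ({j} : Set V).ncard := Set.ncard_union_le _ _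
        _ = {k | G.Adj i k ∧ s k = s i}.ncard + 1 := by rw [Set.ncard_singleton]
    omega

lemma deg_split {V : Type*} [Fintype V] (G : SimpleGraph V) (s : V → Fin 2) (i : V) :
    {j | G.Adj i j ∧ s j = s i}.ncard + {j | G.Adj i j ∧ s j = s i + 1}.ncard
      = (G.neighborSet i).ncard := by
  rw [← Set.ncard_union_eq ?_ (Set.toFinite _) (Set.toFinite _)]
  · congr 1
    ext j
    simp only [Set.mem_union, Set.mem_setOf_eq, SimpleGraph.mem_neighborSet]
    constructor
    · rintro (⟨h, -⟩ | ⟨h, -⟩) <;> exact h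
    · intro h
      have : s j = s i ∨ s j = s i + 1 := by omega
      tauto
  · rw [Set.disjoint_left]
    rintro k ⟨-, h1⟩ ⟨-, h2⟩
    rw [h1] at h2
    omega

lemma sum_neighbor_ncard {V : Type*} [Fintype V] (G : SimpleGraph V) :
    ∑ i, (G.neighborSet i).ncard = 2 * G.edgeSet.ncard := by
  classical
  have h1 : ∀ i, (G.neighborSet i).ncard = G.degree i := by
    intro i
    rw [Set.ncard_eq_toFinset_card', ← SimpleGraph.card_neighborFinset_eq_degree]
    congr 1
  have h2 : G.edgeSet.ncard = G.edgeFinset.card := by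
    rw [← SimpleGraph.coe_edgeFinset, Set.ncard_coe_finset]
  simp_rw [h1, h2]
  exact G.sum_degrees_eq_twice_card_edges

/-- In a two-colour graph coordination game: the social welfare of a stable transition
is at least `|E| − |N|` and that of a Nash equilibrium is at least `|E|`; since the
maximum social welfare is `2|E|`, the price of stable transition anarchy is at least
`1/2 − |N|/(2|E|)` and the price of anarchy is at least `1/2`. -/
theorem stmt17 {V : Type*} [Fintype V] [DecidableEq V] (G : SimpleGraph V)
    (s : V → Fin 2) :
    (isStableTransition G s →
      (G.edgeSet.ncard : ℤ) - Fintype.card V ≤ (∑ i, coordUtil G s i : ℤ)) ∧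
    (isNashEq G s →
      (G.edgeSet.ncard : ℤ) ≤ (∑ i, coordUtil G s i : ℤ)) ∧
    (0 < G.edgeSet.ncard →
      (isStableTransition G s →
        1 / 2 - (Fintype.card V : ℝ) / (2 * G.edgeSet.ncard) ≤
          (∑ i, coordUtil G s i : ℝ) / (2 * G.edgeSet.ncard)) ∧
      (isNashEq G s →
        (1 : ℝ) / 2 ≤ (∑ i, coordUtil G s i : ℝ) / (2 * G.edgeSet.ncard))) := by
  have hutil : ∀ i, coordUtil G s i = {j | G.Adj i j ∧ s j = s i}.ncard := fun i => rfl
  -- total: ∑ (same + diff) = 2|E|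
  have htot : ∑ i, ({j | G.Adj i j ∧ s j = s i}.ncard + {j | G.Adj i j ∧ s j = s i + 1}.ncard)
      = 2 * G.edgeSet.ncard := by
    simp_rw [deg_split]
    exact sum_neighbor_ncard G
  have hstable : isStableTransition G s →
      (G.edgeSet.ncard : ℤ) - Fintype.card V ≤ (∑ i, coordUtil G s i : ℤ) := by
    intro h
    have hpt : ∀ i, {j | G.Adj i j ∧ s j = s i + 1}.ncard
        ≤ {j | G.Adj i j ∧ s j = s i}.ncard + 2 := fun i => stable_pointwise G s h i _
    have hsum : 2 * G.edgeSet.ncard ≤ 2 * (∑ i, coordUtil G s i) + 2 * Fintype.card V := by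
      rw [← htot]
      calc ∑ i, ({j | G.Adj i j ∧ s j = s i}.ncard + {j | G.Adj i j ∧ s j = s i + 1}.ncard)
          ≤ ∑ i, (2 * {j | G.Adj i j ∧ s j = s i}.ncard + 2) := by
            apply Finset.sum_le_sum
            intro i _
            have := hpt i
            omega
        _ = 2 * (∑ i, coordUtil G s i) + 2 * Fintype.card V := by
            simp_rw [hutil]
            rw [Finset.sum_add_distrib, ← Finset.mul_sum]
            simp [Finset.card_univ, mul_comm]
    have := hsum
    push_cast at this ⊢
    linarith
  have hnash : isNashEq G s →
      (G.edgeSet.ncard : ℤ) ≤ (∑ i, coordUtil G s i : ℤ) := by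
    intro h
    have hsum : 2 * G.edgeSet.ncard ≤ 2 * (∑ i, coordUtil G s i) := by
      rw [← htot]
      calc ∑ i, ({j | G.Adj i j ∧ s j = s i}.ncard + {j | G.Adj i j ∧ s j = s i + 1}.ncard)
          ≤ ∑ i, (2 * {j | G.Adj i j ∧ s j = s i}.ncard) := by
            apply Finset.sum_le_sum
            intro i _
            have := nash_pointwise G s (h i) (s i + 1)
            omega
        _ = 2 * (∑ i, coordUtil G s i) := by
            simp_rw [hutil]
            rw [← Finset.mul_sum]
    have := hsum
    push_cast at this ⊢
    linarith
  refine ⟨hstable, hnash, fun hE => ⟨?_, ?_⟩⟩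
  · intro h
    have hI := hstable h
    have hm : (0 : ℝ) < 2 * G.edgeSet.ncard := by positivity
    have hle : (G.edgeSet.ncard : ℝ) - Fintype.card V ≤ (∑ i, coordUtil G s i : ℝ) := by
      exact_mod_cast hI
    have heq : (1 : ℝ) / 2 - (Fintype.card V : ℝ) / (2 * G.edgeSet.ncard)
        = ((G.edgeSet.ncard : ℝ) - Fintype.card V) / (2 * G.edgeSet.ncard) := by
      field_simp
    rw [heq]
    exact div_le_div_of_nonneg_right hle hm.le
  · intro h
    have hI := hnash h
    have hm : (0 : ℝ) < 2 * G.edgeSet.ncard := by positivity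
    have hle : (G.edgeSet.ncard : ℝ) ≤ (∑ i, coordUtil G s i : ℝ) := by exact_mod_cast hI
    have heq : (1 : ℝ) / 2 = (G.edgeSet.ncard : ℝ) / (2 * G.edgeSet.ncard) := by
      field_simp
    rw [heq]
    exact div_le_div_of_nonneg_right hle hm.le
end

section
/- In the two-colour coordination game on a cycle of length n ≥ 4, the alternating colouring (colours 1 and 2 alternating around the cycle, with one same-coloured adjacent pair when n is odd) is a stable transition that is not a Nash equilibrium; for even n its social welfare is 0 = |E| − |N|, attaining the lower bound for stable transitions. -/
/-- The cycle graph on `ZMod n`: `i` and `j` are adjacent iff they differ by `1`. -/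
def cycleGraph (n : ℕ) : SimpleGraph (ZMod n) where
  Adj i j := i ≠ j ∧ (i + 1 = j ∨ j + 1 = i)
  symm := by
    constructor
    intro i j h
    exact ⟨h.1.symm, h.2.symm⟩
  loopless := by
    constructor
    intro i h
    exact h.1 rfl

set_option linter.unusedSectionVars false

section Aux

variable {n : ℕ} [NeZero n]

lemma natCast_ne_zero' {a : ℕ} (h0 : 0 < a) (hlt : a < n) : (a : ZMod n) ≠ 0 := by
  intro h
  have hd := (ZMod.natCast_eq_zero_iff a n).mp h
  exact absurd (Nat.le_of_dvd h0 hd) (by omega)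

lemma one_ne (hn : 4 ≤ n) : (1 : ZMod n) ≠ 0 := by
  simpa using natCast_ne_zero' (n := n) (a := 1) (by omega) (by omega)

lemma two_ne (hn : 4 ≤ n) : (2 : ZMod n) ≠ 0 := by
  simpa using natCast_ne_zero' (n := n) (a := 2) (by omega) (by omega)

lemma three_ne (hn : 4 ≤ n) : (3 : ZMod n) ≠ 0 := by
  simpa using natCast_ne_zero' (n := n) (a := 3) (by omega) (by omega)

lemma val_one' (hn : 4 ≤ n) : (1 : ZMod n).val = 1 := by
  rw [ZMod.val_one_eq_one_mod, Nat.mod_eq_of_lt (by omega)]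

lemma adj_iff (hn : 4 ≤ n) {i j : ZMod n} :
    (cycleGraph n).Adj i j ↔ j = i + 1 ∨ j = i - 1 := by
  show (i ≠ j ∧ (i + 1 = j ∨ j + 1 = i)) ↔ _
  constructor
  · rintro ⟨hne, h | h⟩
    · exact Or.inl h.symm
    · exact Or.inr (eq_sub_of_add_eq h)
  · rintro (rfl | rfl)
    · refine ⟨?_, Or.inl rfl⟩
      intro h; apply one_ne hn; linear_combination -h
    · refine ⟨?_, Or.inr (sub_add_cancel i 1)⟩
      intro h; apply one_ne hn; linear_combination h

def cnt {n : ℕ} (s : ZMod n → Fin 2) (i : ZMod n) (x : Fin 2) : ℕ :=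
  (if s (i - 1) = x then 1 else 0) + (if s (i + 1) = x then 1 else 0)

lemma util_eq (hn : 4 ≤ n) (s : ZMod n → Fin 2) (i : ZMod n) :
    coordUtil (cycleGraph n) s i = cnt s i (s i) := by
  have hne : i - 1 ≠ i + 1 := by
    intro h; apply two_ne hn; linear_combination -h
  have hset : {j | (cycleGraph n).Adj i j ∧ s j = s i} =
      {j | (j = i - 1 ∨ j = i + 1) ∧ s j = s i} := by
    ext j
    simp only [Set.mem_setOf_eq, adj_iff hn]
    tauto
  rw [coordUtil, hset, cnt]
  by_cases hA : s (i - 1) = s i <;> by_cases hB : s (i + 1) = s i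
  · have h : {j | (j = i - 1 ∨ j = i + 1) ∧ s j = s i} = {i - 1, i + 1} := by
      ext j
      simp only [Set.mem_setOf_eq, Set.mem_insert_iff, Set.mem_singleton_iff]
      constructor
      · exact And.left
      · rintro (rfl | rfl) <;> simp [hA, hB]
    rw [h, Set.ncard_pair hne, if_pos hA, if_pos hB]
  · have h : {j | (j = i - 1 ∨ j = i + 1) ∧ s j = s i} = {i - 1} := by
      ext j
      simp only [Set.mem_setOf_eq, Set.mem_singleton_iff]
      constructor
      · rintro ⟨rfl | rfl, hsj⟩
        · rfl
        · exact absurd hsj hB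
      · rintro rfl; exact ⟨Or.inl rfl, hA⟩
    rw [h, Set.ncard_singleton, if_pos hA, if_neg hB]
  · have h : {j | (j = i - 1 ∨ j = i + 1) ∧ s j = s i} = {i + 1} := by
      ext j
      simp only [Set.mem_setOf_eq, Set.mem_singleton_iff]
      constructor
      · rintro ⟨rfl | rfl, hsj⟩
        · exact absurd hsj hA
        · rfl
      · rintro rfl; exact ⟨Or.inr rfl, hB⟩
    rw [h, Set.ncard_singleton, if_neg hA, if_pos hB]
  · have h : {j | (j = i - 1 ∨ j = i + 1) ∧ s j = s i} = ∅ := by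
      ext j
      simp only [Set.mem_setOf_eq, Set.mem_empty_iff_false, iff_false]
      rintro ⟨rfl | rfl, hsj⟩
      · exact hA hsj
      · exact hB hsj
    rw [h, Set.ncard_empty, if_neg hA, if_neg hB]

lemma util_update (hn : 4 ≤ n) (s : ZMod n → Fin 2) (i : ZMod n) (x : Fin 2) :
    coordUtil (cycleGraph n) (Function.update s i x) i = cnt s i x := by
  have hm : i - 1 ≠ i := by intro h; apply one_ne hn; linear_combination -h
  have hp : i + 1 ≠ i := by intro h; apply one_ne hn; linear_combination h
  rw [util_eq hn, cnt, cnt, Function.update_of_ne hm, Function.update_of_ne hp,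
    Function.update_self]

lemma isBR_iff_s19 (hn : 4 ≤ n) (s : ZMod n → Fin 2) (i : ZMod n) :
    isBR (cycleGraph n) s i ↔ (s (i - 1) = s i ∨ s (i + 1) = s i) := by
  unfold isBR
  simp only [util_update hn, util_eq hn]
  have key : ∀ a b c : Fin 2,
      ((∀ x : Fin 2, ((if a = x then 1 else 0) + (if b = x then 1 else 0) : ℕ) ≤
        (if a = c then 1 else 0) + (if b = c then 1 else 0)) ↔ (a = c ∨ b = c)) := by decide
  simpa [cnt] using key (s (i - 1)) (s (i + 1)) (s i)

end Aux
set_option linter.unusedSectionVars false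

def altc (n : ℕ) : ZMod n → Fin 2 := fun i => if i.val % 2 = 0 then 0 else 1

section Aux2
variable {n : ℕ} [NeZero n]

lemma step_iff (hn : 4 ≤ n) (k : ZMod n) :
    altc n (k + 1) = altc n k ↔ (n % 2 = 1 ∧ k = ((n - 1 : ℕ) : ZMod n)) := by
  have hadd : (k + 1).val = (k.val + 1) % n := by rw [ZMod.val_add, val_one' hn]
  have hv : k.val < n := ZMod.val_lt k
  by_cases hcase : k.val + 1 = n
  · have hk1 : (k + 1).val = 0 := by rw [hadd, hcase, Nat.mod_self]
    have hkeq : k = ((n - 1 : ℕ) : ZMod n) := by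
      conv_lhs => rw [← ZMod.natCast_zmod_val k]
      congr 1
      omega
    rcases Nat.mod_two_eq_zero_or_one n with he | ho
    · have hk2 : k.val % 2 = 1 := by omega
      simp [altc, hk1, hk2, he]
    · have hk2 : k.val % 2 = 0 := by omega
      constructor
      · intro _
        exact ⟨ho, hkeq⟩
      · intro _
        simp [altc, hk1, hk2]
  · have hk1 : (k + 1).val = k.val + 1 := by rw [hadd]; exact Nat.mod_eq_of_lt (by omega)
    have hkne : k ≠ ((n - 1 : ℕ) : ZMod n) := by
      intro h
      have h2 := congrArg ZMod.val h
      rw [ZMod.val_cast_of_lt (by omega)] at h2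
      omega
    rcases Nat.mod_two_eq_zero_or_one k.val with he | ho
    · have h12 : (k.val + 1) % 2 = 1 := by omega
      simp [altc, hk1, h12, he, hkne]
    · have h12 : (k.val + 1) % 2 = 0 := by omega
      simp [altc, hk1, h12, ho, hkne]

lemma core (hn : 4 ≤ n) (s : ZMod n → Fin 2) (i j : ZMod n)
    (hji : j = i + 1 ∨ j = i - 1) (hj1 : s (j - 1) ≠ s j) (hj2 : s (j + 1) ≠ s j) :
    j ≠ i ∧ ¬ isBR (cycleGraph n) s j ∧
      ∃ x : Fin 2, (∀ y : Fin 2, coordUtil (cycleGraph n) (Function.update s j y) j ≤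
        coordUtil (cycleGraph n) (Function.update s j x) j) ∧
      isBR (cycleGraph n) (Function.update s j x) i := by
  have hjineq : j ≠ i := by
    rcases hji with rfl | rfl <;> intro h <;> apply one_ne hn
    · linear_combination h
    · linear_combination -h
  have heq : s (j - 1) = s (j + 1) := by
    have key : ∀ a b c : Fin 2, a ≠ c → b ≠ c → a = b := by decide
    exact key _ _ _ hj1 hj2
  refine ⟨hjineq, ?_, s (j - 1), ?_, ?_⟩
  · rw [isBR_iff_s19 hn]
    rintro (h | h)
    exacts [hj1 h, hj2 h]
  · intro y
    rw [util_update hn, util_update hn, cnt, cnt, if_pos rfl, if_pos heq.symm]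
    split_ifs <;> omega
  · rw [isBR_iff_s19 hn]
    have hii : Function.update s j (s (j - 1)) i = s i :=
      Function.update_of_ne (Ne.symm hjineq) _ _
    rcases hji with rfl | rfl
    · right
      rw [hii, Function.update_self]
      have h : i + 1 - 1 = i := by ring
      rw [h]
    · left
      rw [hii, Function.update_self, heq]
      have h : i - 1 + 1 = i := by ring
      rw [h]
end Aux2

/-- On the cycle of length `n ≥ 4`, the alternating two-colouring is a stable
transition that is not a Nash equilibrium; for even `n` its social welfare is `0`,
attaining the lower bound `|E| − |N| = n − n = 0` for stable transitions. -/
theorem stmt19 (n : ℕ) [NeZero n] (hn : 4 ≤ n) :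
    isStableTransition (cycleGraph n) (fun i => if i.val % 2 = 0 then 0 else 1) ∧
    ¬ isNashEq (cycleGraph n) (fun i => if i.val % 2 = 0 then 0 else 1) ∧
    (cycleGraph n).edgeSet.ncard = n ∧
    (Even n →
      ∑ i : ZMod n,
        coordUtil (cycleGraph n) (fun i => if i.val % 2 = 0 then 0 else 1) i = 0) := by
  have hstep : ∀ k : ZMod n, altc n (k + 1) = altc n k ↔
      (n % 2 = 1 ∧ k = ((n - 1 : ℕ) : ZMod n)) := step_iff hn
  have hvalne : ∀ a : ZMod n, a.val ≠ n - 1 → a ≠ ((n - 1 : ℕ) : ZMod n) := by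
    intro a ha h
    have h2 := congrArg ZMod.val h
    rw [ZMod.val_cast_of_lt (by omega)] at h2
    exact ha h2
  refine ⟨?_, ?_, ?_, ?_⟩
  · -- stable transition
    intro i hi
    rw [isBR_iff_s19 hn] at hi
    push_neg at hi
    obtain ⟨h1, h2⟩ := hi
    by_cases hc : altc n (i + 1 + 1) = altc n (i + 1)
    · obtain ⟨hodd, hip⟩ := (hstep (i + 1)).mp hc
      have hj1 : altc n (i - 1 - 1) ≠ altc n (i - 1) := by
        intro h
        have hrw : i - 1 - 1 + 1 = i - 1 := by ring
        have h3 : altc n (i - 1 - 1 + 1) = altc n (i - 1 - 1) := by rw [hrw]; exact h.symm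
        obtain ⟨_, heq2⟩ := (hstep (i - 1 - 1)).mp h3
        apply three_ne hn
        linear_combination hip - heq2
      have hj2 : altc n (i - 1 + 1) ≠ altc n (i - 1) := by
        have hrw : i - 1 + 1 = i := by ring
        rw [hrw]; exact Ne.symm h1
      obtain ⟨a, b, c⟩ := core hn (altc n) i (i - 1) (Or.inr rfl) hj1 hj2
      exact ⟨i - 1, a, b, c⟩
    · have hj1 : altc n (i + 1 - 1) ≠ altc n (i + 1) := by
        have hrw : i + 1 - 1 = i := by ring
        rw [hrw]; exact Ne.symm h2
      obtain ⟨a, b, c⟩ := core hn (altc n) i (i + 1) (Or.inl rfl) hj1 hc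
      exact ⟨i + 1, a, b, c⟩
  · -- not Nash
    intro hN
    have hB := hN 1
    rw [isBR_iff_s19 hn] at hB
    have h01 : altc n (0 + 1) ≠ altc n 0 := by
      intro hh
      obtain ⟨_, h⟩ := (hstep 0).mp hh
      exact hvalne 0 (by rw [ZMod.val_zero]; omega) h
    have h12 : altc n (1 + 1) ≠ altc n 1 := by
      intro hh
      obtain ⟨_, h⟩ := (hstep 1).mp hh
      exact hvalne 1 (by rw [val_one' hn]; omega) h
    have hB' : altc n (1 - 1) = altc n 1 ∨ altc n (1 + 1) = altc n 1 := hB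
    rcases hB' with h | h
    · apply h01
      rw [zero_add]
      have hrw : (1 : ZMod n) - 1 = 0 := by ring
      rw [hrw] at h
      exact h.symm
    · exact h12 h
  · -- edge count
    have hrange : (cycleGraph n).edgeSet = Set.range (fun i : ZMod n => s(i, i + 1)) := by
      ext e
      induction e using Sym2.ind with
      | _ a b =>
        rw [SimpleGraph.mem_edgeSet, adj_iff hn]
        constructor
        · rintro (rfl | rfl)
          · exact ⟨a, rfl⟩
          · refine ⟨a - 1, ?_⟩
            have hrw : a - 1 + 1 = a := by ring
            show s(a - 1, a - 1 + 1) = s(a, a - 1)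
            rw [hrw, Sym2.eq_swap]
        · rintro ⟨c, hc⟩
          simp only [Sym2.eq, Sym2.rel_iff', Prod.mk.injEq, Prod.swap_prod_mk] at hc
          rcases hc with ⟨rfl, rfl⟩ | ⟨rfl, rfl⟩
          · exact Or.inl rfl
          · exact Or.inr (by ring)
    have hinj : Function.Injective (fun i : ZMod n => s(i, i + 1)) := by
      intro a b h
      simp only [Sym2.eq, Sym2.rel_iff', Prod.mk.injEq, Prod.swap_prod_mk] at h
      rcases h with ⟨rfl, _⟩ | ⟨h1, h2⟩
      · rfl
      · exfalso
        apply two_ne hn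
        linear_combination h2 - h1
    rw [hrange, ← Set.image_univ, Set.ncard_image_of_injective _ hinj, Set.ncard_univ,
      Nat.card_eq_fintype_card, ZMod.card]
  · -- sum zero for even n
    intro he
    have h2n : n % 2 = 0 := Nat.even_iff.mp he
    apply Finset.sum_eq_zero
    intro i _
    show coordUtil (cycleGraph n) (altc n) i = 0
    have hA : altc n (i - 1) ≠ altc n i := by
      intro h
      have hrw : i - 1 + 1 = i := by ring
      have h3 : altc n (i - 1 + 1) = altc n (i - 1) := by rw [hrw]; exact h.symm
      obtain ⟨ho, _⟩ := (hstep (i - 1)).mp h3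
      omega
    have hB : altc n (i + 1) ≠ altc n i := by
      intro h
      obtain ⟨ho, _⟩ := (hstep i).mp h
      omega
    rw [util_eq hn, cnt, if_neg hA, if_neg hB]
end
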